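/- Let d ≥ 1 and let P be the d×d matrix with P_{i,i+1} = 1/2 for 1 ≤ i ≤ d−1, P_{i,i−1} = 1/2 for 2 ≤ i ≤ d, and all other entries 0, and set R = I − Pᵀ. Then R is invertible and (R⁻¹)_{ij} = 2i(1 − j/(d+1)) for all 1 ≤ i ≤ j ≤ d, and (R⁻¹)_{ij} = 2j(1 − i/(d+1)) for all 1 ≤ j < i ≤ d. -/

import Mathlib

open Matrix

noncomputable def Sfun (d a b : ℕ) : ℝ :=
  if a ≤ b then 2 * ((a : ℝ) + 1) * (1 - ((b : ℝ) + 1) / ((d : ℝ) + 1))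
  else 2 * ((b : ℝ) + 1) * (1 - ((a : ℝ) + 1) / ((d : ℝ) + 1))

lemma sum_if_val {d : ℕ} {c : ℕ} (hc : c < d) (f : Fin d → ℝ) :
    (∑ k : Fin d, if (k : ℕ) = c then f k else 0) = f ⟨c, hc⟩ := by
  rw [Finset.sum_eq_single ⟨c, hc⟩]
  · simp
  · intro k _ hk
    exact if_neg (by simpa [Fin.ext_iff] using hk)
  · intro h; exact absurd (Finset.mem_univ _) h

lemma sum_if_val_zero {d : ℕ} {c : ℕ} (hc : ¬ c < d) (f : Fin d → ℝ) :
    (∑ k : Fin d, if (k : ℕ) = c then f k else 0) = 0 :=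
  Finset.sum_eq_zero fun k _ => if_neg (by have := k.isLt; omega)

lemma Sfun_key (d i j : ℕ) (hi : i < d) (hj : j < d) :
    Sfun d i j - (if i + 1 < d then (1/2) * Sfun d (i+1) j else 0)
      - (if 1 ≤ i then (1/2) * Sfun d (i-1) j else 0)
      = if i = j then 1 else 0 := by
  have hD : ((d : ℝ) + 1) ≠ 0 := by positivity
  have hb : (if i + 1 < d then (1/2) * Sfun d (i+1) j else 0)
      = (1/2) * Sfun d (i+1) j := by
    split_ifs with h
    · rfl
    · have h1 : i + 1 = d := by omega
      have h2 : ¬ (i + 1 ≤ j) := by omega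
      have h3 : ((i + 1 : ℕ) : ℝ) = (d : ℝ) := by rw [h1]
      simp only [Sfun, if_neg h2, h3, div_self hD]
      ring
  rw [hb]
  rcases Nat.eq_zero_or_pos i with h0 | h1
  · subst h0
    rw [if_neg (by omega : ¬ 1 ≤ 0), sub_zero]
    rcases Nat.eq_zero_or_pos j with rfl | hj1
    · rw [if_pos rfl]
      simp only [Sfun, if_pos (le_refl 0), if_neg (by omega : ¬ 0 + 1 ≤ 0)]
      push_cast
      field_simp
      try ring1
    · rw [if_neg (by omega : ¬ 0 = j)]
      simp only [Sfun, if_pos (by omega : 0 ≤ j), if_pos (by omega : 0 + 1 ≤ j)]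
      push_cast
      field_simp
      try ring1
  · obtain ⟨n, rfl⟩ : ∃ n, i = n + 1 := ⟨i - 1, by omega⟩
    rw [if_pos (by omega : 1 ≤ n + 1)]
    simp only [Nat.add_sub_cancel]
    rcases lt_trichotomy j n with hc | rfl | hc
    · rw [if_neg (by omega : ¬ n + 1 = j)]
      simp only [Sfun, if_neg (by omega : ¬ n + 1 ≤ j), if_neg (by omega : ¬ n + 1 + 1 ≤ j),
        if_neg (by omega : ¬ n ≤ j)]
      push_cast
      field_simp
      try ring1
    · rw [if_neg (by omega : ¬ j + 1 = j)]
      simp only [Sfun, if_neg (by omega : ¬ j + 1 ≤ j), if_neg (by omega : ¬ j + 1 + 1 ≤ j),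
        if_pos (le_refl j)]
      push_cast
      field_simp
      try ring1
    · rcases Nat.lt_or_ge j (n + 2) with h2 | h2
      · obtain rfl : j = n + 1 := by omega
        rw [if_pos rfl]
        simp only [Sfun, if_pos (le_refl (n + 1)), if_neg (by omega : ¬ n + 1 + 1 ≤ n + 1),
          if_pos (by omega : n ≤ n + 1)]
        push_cast
        field_simp
        try ring1
      · rw [if_neg (by omega : ¬ n + 1 = j)]
        simp only [Sfun, if_pos (by omega : n + 1 ≤ j), if_pos (by omega : n + 1 + 1 ≤ j),
          if_pos (by omega : n ≤ j)]
        push_cast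
        field_simp
        try ring1
/-- Explicit inverse of the symmetric Atlas reflection matrix `R = I - Pᵀ`.
Indices of `Fin d` are 0-based, so the paper's 1-based index `i` corresponds to `(i : ℕ) + 1`. -/
theorem stmt7 (d : ℕ) (hd : 1 ≤ d)
    (P : Matrix (Fin d) (Fin d) ℝ)
    (hP : ∀ i j : Fin d, P i j =
      if (j : ℕ) = (i : ℕ) + 1 then 1/2 else if (i : ℕ) = (j : ℕ) + 1 then 1/2 else 0)
    (R : Matrix (Fin d) (Fin d) ℝ) (hR : R = 1 - Pᵀ) :
    IsUnit R ∧
    (∀ i j : Fin d, (i : ℕ) ≤ (j : ℕ) →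
      R⁻¹ i j = 2 * (((i : ℕ) : ℝ) + 1) * (1 - (((j : ℕ) : ℝ) + 1) / ((d : ℝ) + 1))) ∧
    (∀ i j : Fin d, (j : ℕ) < (i : ℕ) →
      R⁻¹ i j = 2 * (((j : ℕ) : ℝ) + 1) * (1 - (((i : ℕ) : ℝ) + 1) / ((d : ℝ) + 1))) := by
  set S : Matrix (Fin d) (Fin d) ℝ := Matrix.of (fun a b : Fin d => Sfun d (a : ℕ) (b : ℕ))
    with hSdef
  have hS : ∀ a b : Fin d, S a b = Sfun d (a : ℕ) (b : ℕ) := fun _ _ => rfl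
  have hRS : R * S = 1 := by
    ext i j
    rw [Matrix.mul_apply, Matrix.one_apply]
    by_cases hi0 : (i : ℕ) = 0
    · have expand : ∀ k : Fin d, R i k * S k j =
          (if (k : ℕ) = (i : ℕ) then Sfun d (k : ℕ) (j : ℕ) else 0)
          - (if (k : ℕ) = (i : ℕ) + 1 then (1/2) * Sfun d (k : ℕ) (j : ℕ) else 0) := by
        intro k
        rw [hR, hS]
        simp only [Matrix.sub_apply, Matrix.one_apply, Matrix.transpose_apply, hP,
          Fin.ext_iff]
        split_ifs <;> first | (exfalso; omega) | ring
      have e1 : (∑ k : Fin d, if (k : ℕ) = (i : ℕ) then Sfun d (k : ℕ) (j : ℕ) else 0)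
          = Sfun d (i : ℕ) (j : ℕ) := sum_if_val i.isLt _
      have e2 : (∑ k : Fin d, if (k : ℕ) = (i : ℕ) + 1
            then (1/2) * Sfun d (k : ℕ) (j : ℕ) else 0)
          = if (i : ℕ) + 1 < d then (1/2) * Sfun d ((i : ℕ) + 1) (j : ℕ) else 0 := by
        split_ifs with h
        · exact sum_if_val h _
        · exact sum_if_val_zero h _
      simp only [expand]
      rw [Finset.sum_sub_distrib, e1, e2]
      have hk := Sfun_key d (i : ℕ) (j : ℕ) i.isLt j.isLt
      rw [if_neg (by omega : ¬ 1 ≤ (i : ℕ)), sub_zero] at hk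
      rw [hk]
      simp [Fin.ext_iff]
    · have expand : ∀ k : Fin d, R i k * S k j =
          (if (k : ℕ) = (i : ℕ) then Sfun d (k : ℕ) (j : ℕ) else 0)
          - (if (k : ℕ) = (i : ℕ) + 1 then (1/2) * Sfun d (k : ℕ) (j : ℕ) else 0)
          - (if (k : ℕ) = (i : ℕ) - 1 then (1/2) * Sfun d (k : ℕ) (j : ℕ) else 0) := by
        intro k
        rw [hR, hS]
        simp only [Matrix.sub_apply, Matrix.one_apply, Matrix.transpose_apply, hP,
          Fin.ext_iff]
        split_ifs <;> first | (exfalso; omega) | ring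
      have e1 : (∑ k : Fin d, if (k : ℕ) = (i : ℕ) then Sfun d (k : ℕ) (j : ℕ) else 0)
          = Sfun d (i : ℕ) (j : ℕ) := sum_if_val i.isLt _
      have e2 : (∑ k : Fin d, if (k : ℕ) = (i : ℕ) + 1
            then (1/2) * Sfun d (k : ℕ) (j : ℕ) else 0)
          = if (i : ℕ) + 1 < d then (1/2) * Sfun d ((i : ℕ) + 1) (j : ℕ) else 0 := by
        split_ifs with h
        · exact sum_if_val h _
        · exact sum_if_val_zero h _
      have e3 : (∑ k : Fin d, if (k : ℕ) = (i : ℕ) - 1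
            then (1/2) * Sfun d (k : ℕ) (j : ℕ) else 0)
          = (1/2) * Sfun d ((i : ℕ) - 1) (j : ℕ) :=
        sum_if_val (by have := i.isLt; omega) _
      simp only [expand]
      rw [Finset.sum_sub_distrib, Finset.sum_sub_distrib, e1, e2, e3]
      have hk := Sfun_key d (i : ℕ) (j : ℕ) i.isLt j.isLt
      rw [if_pos (by omega : 1 ≤ (i : ℕ))] at hk
      rw [hk]
      simp [Fin.ext_iff]
  have hU : IsUnit R := (Matrix.isUnit_iff_isUnit_det R).mpr (Matrix.isUnit_det_of_right_inverse hRS)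
  have hinv : R⁻¹ = S := Matrix.inv_eq_right_inv hRS
  refine ⟨hU, ?_, ?_⟩
  · intro i j hij
    rw [hinv, hS, Sfun, if_pos hij]
  · intro i j hij
    rw [hinv, hS, Sfun, if_neg (by omega : ¬ (i : ℕ) ≤ (j : ℕ))]
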